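/- Let A be a commutative F∞-algebra, C a cancellative congruence on A, and a, b, c, d ∈ A such that (ac + bd, ad + bc) ∈ C, (a + b, 0) ∉ C, and (c + d, 0) ∉ C. Then for every integer n ≥ 1, (aⁿc + bⁿd, aⁿd + bⁿc) ∈ C. -/
import Mathlib


class FinfModule (M : Type*) extends Zero M, Neg M, Add M where
  add_assoc : ∀ a b c : M, a + b + c = a + (b + c)
  add_comm : ∀ a b : M, a + b = b + a
  add_idem : ∀ a : M, a + a = a
  add_neg : ∀ a : M, a + -a = 0
  neg_add : ∀ a b : M, -(a + b) = -a + -b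
  neg_neg : ∀ a : M, - -a = a

class FinfAlgebra (A : Type*) extends FinfModule A, Mul A where
  mul_assoc : ∀ a b c : A, a * b * c = a * (b * c)
  mul_zero : ∀ a : A, a * 0 = 0
  zero_mul : ∀ a : A, 0 * a = 0
  neg_mul : ∀ a b : A, -a * b = -(a * b)
  mul_neg : ∀ a b : A, a * -b = -(a * b)
  left_distrib : ∀ a b c : A, a * (b + c) = a * b + a * c
  right_distrib : ∀ a b c : A, (a + b) * c = a * c + b * c

structure FinfModCong (M : Type*) [FinfModule M] where
  rel : M → M → Prop
  refl : ∀ a : M, rel a a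
  symm : ∀ {a b : M}, rel a b → rel b a
  trans : ∀ {a b c : M}, rel a b → rel b c → rel a c
  add_compat : ∀ {a b : M} (c : M), rel a b → rel (a + c) (b + c)
  neg_compat : ∀ {a b : M}, rel a b → rel (-a) (-b)

structure FinfCong (A : Type*) [FinfAlgebra A] extends FinfModCong A where
  mul_compat : ∀ {a b : A} (c : A), rel a b → rel (a * c) (b * c)

def FinfCancellative {A : Type*} [FinfAlgebra A] (C : FinfCong A) : Prop :=
  ∀ a b c : A, C.rel (a * b) (a * c) → C.rel a 0 ∨ C.rel b c

def apow {A : Type*} [FinfAlgebra A] (a : A) : ℕ → A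
  | 0 => a
  | 1 => a
  | n + 2 => a * apow a (n + 1)

lemma Finf.zero_add {M : Type*} [FinfModule M] (x : M) : (0 : M) + x = 0 := by
  conv_lhs => rw [← FinfModule.add_neg x]
  rw [FinfModule.add_assoc, FinfModule.add_comm (-x) x, ← FinfModule.add_assoc,
    FinfModule.add_idem, FinfModule.add_neg]

lemma Finf.add_left_comm {M : Type*} [FinfModule M] (a b c : M) :
    a + (b + c) = b + (a + c) := by
  rw [← FinfModule.add_assoc, FinfModule.add_comm a b, FinfModule.add_assoc]

lemma Finf.rel_congr {M : Type*} [FinfModule M] (C : FinfModCong M) {a b a' b' : M}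
    (ha : a = a') (hb : b = b') (h : C.rel a b) : C.rel a' b' := ha ▸ hb ▸ h

lemma Finf.mul_nz {A : Type*} [FinfAlgebra A] {C : FinfCong A} (hC : FinfCancellative C)
    {u v : A} (hu : ¬ C.rel u 0) (hv : ¬ C.rel v 0) : ¬ C.rel (u * v) 0 := by
  intro h
  have h' : C.rel (u * v) (u * 0) := by rw [FinfAlgebra.mul_zero]; exact h
  rcases hC u v 0 h' with h'' | h''
  · exact hu h''
  · exact hv h''

lemma Finf.trans_key {A : Type*} [FinfAlgebra A] (hcomm : ∀ a b : A, a * b = b * a)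
    (C : FinfCong A) (hC : FinfCancellative C) (c d x y z : A)
    (h1 : C.rel (x * c + y * d) (x * d + y * c))
    (h2 : C.rel (y * c + z * d) (y * d + z * c))
    (hxy : ¬ C.rel (x + y) 0) :
    C.rel (x * c + z * d) (x * d + z * c) := by
  have hlc : ∀ u v w : A, u * (v * w) = v * (u * w) := fun u v w => by
    rw [← FinfAlgebra.mul_assoc, hcomm u v, FinfAlgebra.mul_assoc]
  have r1 : C.rel (x*(x*c) + (x*(y*c) + (x*(z*d) + y*(z*d))))
      (x*(x*c) + (y*(z*d) + (x*(y*d) + x*(z*c)))) := by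
    refine Finf.rel_congr C.toFinfModCong ?_ ?_
      (C.add_compat (x*(x*c) + y*(z*d)) (C.mul_compat x h2)) <;>
      simp only [FinfAlgebra.left_distrib, FinfAlgebra.right_distrib,
        FinfAlgebra.mul_assoc, hcomm, hlc,
        FinfModule.add_assoc, FinfModule.add_comm, Finf.add_left_comm]
  have r2 : C.rel (x*(x*c) + (y*(z*d) + (x*(y*d) + x*(z*c))))
      (x*(x*d) + (x*(y*c) + (x*(z*c) + y*(z*d)))) := by
    refine Finf.rel_congr C.toFinfModCong ?_ ?_
      (C.add_compat (x*(z*c) + y*(z*d)) (C.mul_compat x h1)) <;>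
      simp only [FinfAlgebra.left_distrib, FinfAlgebra.right_distrib,
        FinfAlgebra.mul_assoc, hcomm, hlc,
        FinfModule.add_assoc, FinfModule.add_comm, Finf.add_left_comm]
  have r3 : C.rel (x*(x*d) + (x*(y*c) + (x*(z*c) + y*(z*d))))
      (x*(x*d) + (x*(y*c) + (x*(z*d) + y*(z*c)))) := by
    refine Finf.rel_congr C.toFinfModCong ?_ ?_
      (C.add_compat (x*(x*d) + x*(y*c)) (C.mul_compat z h1)) <;>
      simp only [FinfAlgebra.left_distrib, FinfAlgebra.right_distrib,
        FinfAlgebra.mul_assoc, hcomm, hlc,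
        FinfModule.add_assoc, FinfModule.add_comm, Finf.add_left_comm]
  have r4 : C.rel (x*(x*d) + (x*(y*c) + (x*(z*d) + y*(z*c))))
      (x*(x*d) + (x*(y*d) + (x*(z*c) + y*(z*c)))) := by
    refine Finf.rel_congr C.toFinfModCong ?_ ?_
      (C.add_compat (x*(x*d) + y*(z*c)) (C.mul_compat x h2)) <;>
      simp only [FinfAlgebra.left_distrib, FinfAlgebra.right_distrib,
        FinfAlgebra.mul_assoc, hcomm, hlc,
        FinfModule.add_assoc, FinfModule.add_comm, Finf.add_left_comm]
  have chain := C.trans (C.trans (C.trans r1 r2) r3) r4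
  have key : C.rel ((x + y) * (x * c + z * d)) ((x + y) * (x * d + z * c)) := by
    refine Finf.rel_congr C.toFinfModCong ?_ ?_ chain <;>
      simp only [FinfAlgebra.left_distrib, FinfAlgebra.right_distrib,
        FinfAlgebra.mul_assoc, hcomm, hlc,
        FinfModule.add_assoc, FinfModule.add_comm, Finf.add_left_comm]
  rcases hC (x + y) (x * c + z * d) (x * d + z * c) key with h' | h'
  · exact absurd h' hxy
  · exact h'

lemma Finf.apow_succ {A : Type*} [FinfAlgebra A] (a : A) (n : ℕ) (hn : 1 ≤ n) :
    apow a (n + 1) = a * apow a n := by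
  cases n with
  | zero => omega
  | succ k => rfl

theorem stmt14 {A : Type*} [FinfAlgebra A] (hcomm : ∀ a b : A, a * b = b * a)
    (C : FinfCong A) (hC : FinfCancellative C) (a b c d : A)
    (h : C.rel (a * c + b * d) (a * d + b * c))
    (hab : ¬ C.rel (a + b) 0) (hcd : ¬ C.rel (c + d) 0) :
    ∀ n : ℕ, 1 ≤ n →
      C.rel (apow a n * c + apow b n * d) (apow a n * d + apow b n * c) := by
  have hlc : ∀ u v w : A, u * (v * w) = v * (u * w) := fun u v w => by
    rw [← FinfAlgebra.mul_assoc, hcomm u v, FinfAlgebra.mul_assoc]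
  have hna : ¬ C.rel a 0 := by
    intro ha
    apply hab
    have := C.add_compat b ha
    rwa [Finf.zero_add] at this
  have hnb : ¬ C.rel b 0 := by
    intro hb
    apply hab
    have := C.add_compat a hb
    rw [Finf.zero_add] at this
    rwa [FinfModule.add_comm b a] at this
  have hpa : ∀ (u : A), ¬ C.rel u 0 → ∀ n : ℕ, ¬ C.rel (apow u n) 0 := by
    intro u hu n
    induction n with
    | zero => exact hu
    | succ k ih =>
      cases k with
      | zero => exact hu
      | succ j =>
        exact Finf.mul_nz hC hu ih
  intro n hn
  induction n, hn using Nat.le_induction with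
  | base => exact h
  | succ n hn ih =>
    rw [Finf.apow_succ a n hn, Finf.apow_succ b n hn]
    set An := apow a n with hAn
    set Bn := apow b n with hBn
    refine Finf.trans_key hcomm C hC c d (a * An) (b * An) (b * Bn) ?_ ?_ ?_
    · refine Finf.rel_congr C.toFinfModCong ?_ ?_ (C.mul_compat An h) <;>
        simp only [FinfAlgebra.left_distrib, FinfAlgebra.right_distrib,
          FinfAlgebra.mul_assoc, hcomm, hlc,
          FinfModule.add_assoc, FinfModule.add_comm, Finf.add_left_comm]
    · refine Finf.rel_congr C.toFinfModCong ?_ ?_ (C.mul_compat b ih) <;>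
        simp only [FinfAlgebra.left_distrib, FinfAlgebra.right_distrib,
          FinfAlgebra.mul_assoc, hcomm, hlc,
          FinfModule.add_assoc, FinfModule.add_comm, Finf.add_left_comm]
    · rw [show a * An + b * An = (a + b) * An from (FinfAlgebra.right_distrib a b An).symm ▸ rfl]
      · exact Finf.mul_nz hC hab (hpa a hna n)
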